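/- Let $V$ be a finite-dimensional symplectic vector space over a field $F$ and $h \in Sp(V)$ an isometry of $V$. If $h$ stabilizes no nonzero proper isotropic subspace of $V$ and stabilizes no nontrivial orthogonal direct sum decomposition $V = V_1 \oplus V_2$ into symplectic subspaces, then $h$ is semisimple and $F[h] \subseteq \mathrm{End}_F(V)$ is a field. -/

import Mathlib

set_option synthInstance.maxHeartbeats 1000000
set_option maxHeartbeats 1000000
set_option linter.unusedVariables false


/-- Let `V` be a finite-dimensional symplectic vector space over a finite field `F` of odd
characteristic and `h` an isometry of `V`. If `h` stabilizes no nonzero isotropic subspace of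
`V` and stabilizes no nontrivial orthogonal direct-sum decomposition `V = V₁ ⊕ V₂` into
symplectic subspaces, then `h` is semisimple (squarefree minimal polynomial) and
`F[h] ⊆ End_F(V)` is a field. -/
theorem irreducible_isometry_semisimple_field {F V : Type*} [Field F] [Finite F]
    (hch : ringChar F ≠ 2) [AddCommGroup V] [Module F V] [FiniteDimensional F V]
    [Nontrivial V]
    (B : V →ₗ[F] V →ₗ[F] F) (halt : ∀ v, B v v = 0)
    (hnd : ∀ v : V, (∀ w : V, B v w = 0) → v = 0)
    (h : V ≃ₗ[F] V) (hiso : ∀ v w : V, B (h v) (h w) = B v w)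
    (hnoiso : ∀ W : Submodule F V, (∀ w ∈ W, h w ∈ W) →
      (∀ w ∈ W, ∀ w' ∈ W, B w w' = 0) → W = ⊥)
    (hnodec : ∀ V₁ V₂ : Submodule F V, IsCompl V₁ V₂ →
      (∀ v₁ ∈ V₁, ∀ v₂ ∈ V₂, B v₁ v₂ = 0) →
      (∀ w ∈ V₁, h w ∈ V₁) → (∀ w ∈ V₂, h w ∈ V₂) →
      (∀ v ∈ V₁, (∀ w ∈ V₁, B v w = 0) → v = 0) →
      (∀ v ∈ V₂, (∀ w ∈ V₂, B v w = 0) → v = 0) →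
      V₁ = ⊥ ∨ V₂ = ⊥) :
    Squarefree (minpoly F (h : V →ₗ[F] V)) ∧
      IsField (Algebra.adjoin F ({(h : V →ₗ[F] V)} : Set (Module.End F V))) := by
  classical
  set f : Module.End F V := (h : V →ₗ[F] V) with hf
  have hAlt : LinearMap.BilinForm.IsAlt B := halt
  have hRefl : LinearMap.BilinForm.IsRefl B := hAlt.isRefl
  -- invariant subspaces are stable under h.symm
  have hinv_symm : ∀ W : Submodule F V, (∀ w ∈ W, h w ∈ W) → ∀ w ∈ W, h.symm w ∈ W := by
    intro W hW
    have hle : W.map (h : V →ₗ[F] V) ≤ W := by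
      rintro x ⟨y, hy, rfl⟩; exact hW y hy
    have hmap : W.map (h : V →ₗ[F] V) = W := by
      apply Submodule.eq_of_le_of_finrank_le hle
      rw [LinearEquiv.finrank_map_eq h W]
    intro w hw
    rw [← hmap] at hw
    obtain ⟨y, hy, hyw⟩ := hw
    rw [← hyw]
    simpa using hy
  -- key: every invariant subspace is ⊥ or ⊤
  have key : ∀ W : Submodule F V, (∀ w ∈ W, h w ∈ W) → W = ⊥ ∨ W = ⊤ := by
    intro W hW
    set W' := LinearMap.BilinForm.orthogonal B W with hW'def
    have hW'inv : ∀ w ∈ W', h w ∈ W' := by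
      intro w hw n hn
      have h1 := hiso (h.symm n) w
      rw [h.apply_symm_apply] at h1
      show B n (h w) = 0
      rw [h1]
      exact hw (h.symm n) (hinv_symm W hW n hn)
    have hU : W ⊓ W' = ⊥ := by
      apply hnoiso
      · intro w hw
        exact Submodule.mem_inf.2 ⟨hW w (Submodule.mem_inf.1 hw).1,
          hW'inv w (Submodule.mem_inf.1 hw).2⟩
      · intro w hw w' hw'
        exact (Submodule.mem_inf.1 hw').2 w (Submodule.mem_inf.1 hw).1
    have hres : (LinearMap.BilinForm.restrict B W).Nondegenerate := by
      refine (LinearMap.IsRefl.nondegenerate_iff_separatingLeft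
        (B := LinearMap.BilinForm.restrict B W) (fun x y hxy => hRefl _ _ hxy)).2 ?_
      rintro ⟨v, hv⟩ hv0
      have hvW' : v ∈ W' := by
        intro n hn
        exact hRefl v n (hv0 ⟨n, hn⟩)
      have : v ∈ W ⊓ W' := Submodule.mem_inf.2 ⟨hv, hvW'⟩
      rw [hU] at this
      exact Subtype.ext this
    have hcompl : IsCompl W W' :=
      LinearMap.BilinForm.isCompl_orthogonal_of_restrict_nondegenerate hRefl hres
    have horth : ∀ v₁ ∈ W, ∀ v₂ ∈ W', B v₁ v₂ = 0 := fun v₁ h₁ v₂ h₂ => h₂ v₁ h₁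
    have hndW : ∀ v ∈ W, (∀ w ∈ W, B v w = 0) → v = 0 := by
      intro v hv hv0
      have hvW' : v ∈ W' := fun n hn => hRefl v n (hv0 n hn)
      have : v ∈ W ⊓ W' := Submodule.mem_inf.2 ⟨hv, hvW'⟩
      rw [hU] at this; exact this
    have hndW' : ∀ v ∈ W', (∀ w ∈ W', B v w = 0) → v = 0 := by
      intro v hv hv0
      apply hnd
      intro u
      have hu : u ∈ W ⊔ W' := by rw [hcompl.sup_eq_top]; trivial
      obtain ⟨y, hy, z, hz, rfl⟩ := Submodule.mem_sup.1 hu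
      rw [map_add]
      have h1 : B v y = 0 := hRefl y v (hv y hy)
      have h2 : B v z = 0 := hv0 z hz
      rw [h1, h2, add_zero]
    rcases hnodec W W' hcompl horth hW hW'inv hndW hndW' with h1 | h2
    · exact Or.inl h1
    · exact Or.inr
        (LinearMap.BilinForm.eq_top_of_restrict_nondegenerate_of_orthogonal_eq_bot hRefl hres h2)
  -- commutation of polynomials in f with f
  have hcomm : ∀ r : Polynomial F, Polynomial.aeval f r * f = f * Polynomial.aeval f r := by
    intro r
    have h1 := map_mul (Polynomial.aeval f) r Polynomial.X
    have h2 := map_mul (Polynomial.aeval f) Polynomial.X r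
    rw [Polynomial.aeval_X] at h1 h2
    rw [← h1, ← h2, mul_comm r]
  -- kernels of polynomials in f are invariant, hence ⊥ or ⊤
  have hker : ∀ r : Polynomial F,
      LinearMap.ker (Polynomial.aeval f r) = ⊥ ∨ LinearMap.ker (Polynomial.aeval f r) = ⊤ := by
    intro r
    apply key
    intro w hw
    rw [LinearMap.mem_ker] at hw ⊢
    have : (Polynomial.aeval f r * f) w = (f * Polynomial.aeval f r) w := by rw [hcomm r]
    rw [Module.End.mul_apply, Module.End.mul_apply] at this
    show Polynomial.aeval f r ((f : Module.End F V) w) = 0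
    rw [this, hw, map_zero]
  have hint : IsIntegral F f := Algebra.IsIntegral.isIntegral f
  have hmin_ne : minpoly F f ≠ 0 := minpoly.ne_zero hint
  -- irreducibility of minpoly
  have hirr : Irreducible (minpoly F f) := by
    constructor
    · exact minpoly.not_isUnit F f
    · intro p q hpq
      rcases hker p with hp | hp
      · -- aeval f p injective, so aeval f q = 0
        have hq0 : Polynomial.aeval f q = 0 := by
          apply LinearMap.ext
          intro v
          have : Polynomial.aeval f p (Polynomial.aeval f q v) = 0 := by
            have h1 : Polynomial.aeval f (minpoly F f) = 0 := minpoly.aeval F f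
            have h2 : Polynomial.aeval f p * Polynomial.aeval f q = 0 := by
              rw [← map_mul, ← hpq, h1]
            have := congrArg (fun g : Module.End F V => g v) h2
            simpa [Module.End.mul_apply] using this
          have hinj := LinearMap.ker_eq_bot.1 hp
          exact hinj (by simpa using this)
        have hdvd : minpoly F f ∣ q := minpoly.dvd F f hq0
        obtain ⟨r, hr⟩ := hdvd
        left
        have : minpoly F f * 1 = minpoly F f * (r * p) := by
          rw [mul_one]
          calc minpoly F f = p * q := hpq
            _ = p * (minpoly F f * r) := by rw [hr]
            _ = minpoly F f * (r * p) := by ring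
        have h1 := mul_left_cancel₀ hmin_ne this
        exact IsUnit.of_mul_eq_one (a := p) r (by rw [mul_comm]; exact h1.symm)
      · -- aeval f p = 0
        have hp0 : Polynomial.aeval f p = 0 := LinearMap.ker_eq_top.1 hp
        have hdvd : minpoly F f ∣ p := minpoly.dvd F f hp0
        obtain ⟨r, hr⟩ := hdvd
        right
        have : minpoly F f * 1 = minpoly F f * (r * q) := by
          rw [mul_one]
          calc minpoly F f = p * q := hpq
            _ = minpoly F f * (r * q) := by rw [hr]; ring
        have h1 := mul_left_cancel₀ hmin_ne this
        exact IsUnit.of_mul_eq_one (a := q) r (by rw [mul_comm]; exact h1.symm)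
  refine ⟨hirr.squarefree, ?_⟩
  -- the adjoined algebra is a field
  set A := Algebra.adjoin F ({f} : Set (Module.End F V)) with hA
  have hmem : ∀ x : A, ∃ p : Polynomial F, Polynomial.aeval f p = (x : Module.End F V) := by
    intro x
    have : (x : Module.End F V) ∈ (Polynomial.aeval (R := F) f).range := by
      rw [← Algebra.adjoin_singleton_eq_range_aeval F f]
      exact x.2
    exact this
  constructor
  · -- 0 ≠ 1
    refine ⟨0, 1, fun e => ?_⟩
    have := congrArg (Subtype.val) e
    simp only [ZeroMemClass.coe_zero, OneMemClass.coe_one] at this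
    obtain ⟨v, hv⟩ := exists_ne (0 : V)
    have := congrArg (fun g : Module.End F V => g v) this
    simp at this
    exact hv this.symm
  · -- commutativity
    intro a b
    obtain ⟨p, hp⟩ := hmem a
    obtain ⟨q, hq⟩ := hmem b
    apply Subtype.ext
    show (a : Module.End F V) * b = (b : Module.End F V) * a
    rw [← hp, ← hq, ← map_mul, ← map_mul, mul_comm p q]
  · -- inverses
    intro a ha
    have hane : (a : Module.End F V) ≠ 0 := by
      intro e; exact ha (Subtype.ext e)
    obtain ⟨p, hp⟩ := hmem a
    have hinj : Function.Injective (a : Module.End F V) := by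
      rw [← LinearMap.ker_eq_bot]
      rcases hker p with h1 | h1
      · rw [hp] at h1; exact h1
      · exfalso; apply hane
        rw [← hp]
        exact LinearMap.ker_eq_top.1 h1
    -- left multiplication by a on A is injective F-linear, hence surjective
    have hLinj : Function.Injective (LinearMap.mulLeft F a) := by
      intro y z hyz
      simp only [LinearMap.mulLeft_apply] at hyz
      have hcoe : (a : Module.End F V) * y = (a : Module.End F V) * z :=
        congrArg Subtype.val hyz
      apply Subtype.ext
      apply LinearMap.ext
      intro v
      apply hinj
      have := congrArg (fun g : Module.End F V => g v) hcoe
      simpa [Module.End.mul_apply] using this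
    obtain ⟨b, hb⟩ := (LinearMap.injective_iff_surjective (f := LinearMap.mulLeft F a)).1 hLinj 1
    exact ⟨b, by simpa [LinearMap.mulLeft_apply] using hb⟩
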